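/- For the nested logit generating function with μ_l ≥ 1, the mixed second partial derivatives are nonpositive: ∂²G/(∂Y_j ∂Y_k)(Y) ≤ 0 for all j ≠ k and all Y in the positive orthant. -/

import Mathlib

open Finset

section
variable {m L : ℕ} (n : Fin L → Finset (Fin m)) (μ : Fin L → ℝ)

noncomputable def Sfun (l : Fin L) (W : Fin m → ℝ) : ℝ := ∑ i ∈ n l, W i ^ μ l

noncomputable def Sder (l : Fin L) (Z : Fin m → ℝ) : (Fin m → ℝ) →L[ℝ] ℝ :=
  ∑ i ∈ n l, (μ l * Z i ^ (μ l - 1)) • ContinuousLinearMap.proj i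

lemma hasFDerivAt_S (l : Fin L) (Z : Fin m → ℝ) (hZ : ∀ i, 0 < Z i) :
    HasFDerivAt (Sfun n μ l) (Sder n μ l Z) Z := by
  apply HasFDerivAt.fun_sum
  intro i _
  have h1 : HasDerivAt (fun x : ℝ => x ^ μ l) (μ l * Z i ^ (μ l - 1)) (Z i) :=
    Real.hasDerivAt_rpow_const (Or.inl (hZ i).ne')
  exact h1.comp_hasFDerivAt (f := fun W : Fin m → ℝ => W i) Z (hasFDerivAt_apply i Z)

lemma Spos (l : Fin L) (hne : (n l).Nonempty) (Z : Fin m → ℝ) (hZ : ∀ i, 0 < Z i) :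
    0 < Sfun n μ l Z :=
  Finset.sum_pos (fun i _ => Real.rpow_pos_of_pos (hZ i) _) hne

lemma Sder_single (l : Fin L) (Z : Fin m → ℝ) (j : Fin m) :
    Sder n μ l Z (Pi.single j 1) =
      if j ∈ n l then μ l * Z j ^ (μ l - 1) else 0 := by
  simp only [Sder, ContinuousLinearMap.sum_apply, ContinuousLinearMap.smul_apply,
    ContinuousLinearMap.proj_apply, Pi.single_apply]
  rw [← Finset.sum_ite_eq' (n l) j (fun i => μ l * Z i ^ (μ l - 1))]
  congr 1
  ext i
  by_cases h : i = j <;> simp [h]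

noncomputable def Gder (Z : Fin m → ℝ) : (Fin m → ℝ) →L[ℝ] ℝ :=
  ∑ l : Fin L, ((1 / μ l) * (Sfun n μ l Z) ^ (1 / μ l - 1)) • Sder n μ l Z

lemma hasFDerivAt_G (hne : ∀ l, (n l).Nonempty) (Z : Fin m → ℝ) (hZ : ∀ i, 0 < Z i) :
    HasFDerivAt (fun W : Fin m → ℝ => ∑ l : Fin L, (∑ i ∈ n l, (W i) ^ μ l) ^ (1 / μ l))
      (Gder n μ Z) Z := by
  apply HasFDerivAt.fun_sum
  intro l _
  have h1 : HasDerivAt (fun x : ℝ => x ^ (1 / μ l))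
      ((1 / μ l) * (Sfun n μ l Z) ^ (1 / μ l - 1)) (Sfun n μ l Z) :=
    Real.hasDerivAt_rpow_const (Or.inl (Spos n μ l (hne l) Z hZ).ne')
  exact h1.comp_hasFDerivAt Z (hasFDerivAt_S n μ l Z hZ)

noncomputable def Ffun (j : Fin m) (Z : Fin m → ℝ) : ℝ :=
  ∑ l : Fin L, if j ∈ n l then
    ((1 / μ l) * (Sfun n μ l Z) ^ (1 / μ l - 1)) * (μ l * Z j ^ (μ l - 1)) else 0

lemma fderiv_G_single (hne : ∀ l, (n l).Nonempty) (j : Fin m)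
    (Z : Fin m → ℝ) (hZ : ∀ i, 0 < Z i) :
    fderiv ℝ (fun W : Fin m → ℝ => ∑ l : Fin L, (∑ i ∈ n l, (W i) ^ μ l) ^ (1 / μ l))
      Z (Pi.single j 1) = Ffun n μ j Z := by
  rw [(hasFDerivAt_G n μ hne Z hZ).fderiv]
  simp only [Gder, ContinuousLinearMap.sum_apply, ContinuousLinearMap.smul_apply,
    Sder_single, Ffun, smul_eq_mul]
  congr 1
  ext l
  by_cases h : j ∈ n l <;> simp [h]

noncomputable def Fder (j : Fin m) (Y : Fin m → ℝ) (l : Fin L) : (Fin m → ℝ) →L[ℝ] ℝ :=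
  if j ∈ n l then
    ((1 / μ l) * (Sfun n μ l Y) ^ (1 / μ l - 1)) •
        ((μ l) • (((μ l - 1) * Y j ^ (μ l - 1 - 1)) • (ContinuousLinearMap.proj j : (Fin m → ℝ) →L[ℝ] ℝ)))
      + (μ l * Y j ^ (μ l - 1)) •
        ((1 / μ l) • (((1 / μ l - 1) * (Sfun n μ l Y) ^ (1 / μ l - 1 - 1)) • Sder n μ l Y))
  else 0

lemma hasFDerivAt_F (hne : ∀ l, (n l).Nonempty) (j : Fin m)
    (Y : Fin m → ℝ) (hY : ∀ i, 0 < Y i) :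
    HasFDerivAt (Ffun n μ j) (∑ l : Fin L, Fder n μ j Y l) Y := by
  apply HasFDerivAt.fun_sum
  intro l _
  by_cases h : j ∈ n l
  · simp only [Fder, if_pos h]
    have hA : HasFDerivAt (fun Z : Fin m → ℝ => (1 / μ l) * (Sfun n μ l Z) ^ (1 / μ l - 1))
        ((1 / μ l) • (((1 / μ l - 1) * (Sfun n μ l Y) ^ (1 / μ l - 1 - 1)) • Sder n μ l Y)) Y := by
      have h1 : HasDerivAt (fun x : ℝ => x ^ (1 / μ l - 1))
          ((1 / μ l - 1) * (Sfun n μ l Y) ^ (1 / μ l - 1 - 1)) (Sfun n μ l Y) :=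
        Real.hasDerivAt_rpow_const (Or.inl (Spos n μ l (hne l) Y hY).ne')
      exact (h1.comp_hasFDerivAt Y (hasFDerivAt_S n μ l Y hY)).const_mul _
    have hB : HasFDerivAt (fun Z : Fin m → ℝ => μ l * Z j ^ (μ l - 1))
        ((μ l) • (((μ l - 1) * Y j ^ (μ l - 1 - 1)) • (ContinuousLinearMap.proj j : (Fin m → ℝ) →L[ℝ] ℝ))) Y := by
      have h1 : HasDerivAt (fun x : ℝ => x ^ (μ l - 1))
          ((μ l - 1) * Y j ^ (μ l - 1 - 1)) (Y j) :=
        Real.hasDerivAt_rpow_const (Or.inl (hY j).ne')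
      exact (h1.comp_hasFDerivAt (f := fun W : Fin m → ℝ => W j) Y (hasFDerivAt_apply j Y)).const_mul _
    have hmul : HasFDerivAt
        (fun Z : Fin m → ℝ =>
          ((1 / μ l) * (Sfun n μ l Z) ^ (1 / μ l - 1)) * (μ l * Z j ^ (μ l - 1)))
        (((1 / μ l) * (Sfun n μ l Y) ^ (1 / μ l - 1)) •
            ((μ l) • (((μ l - 1) * Y j ^ (μ l - 1 - 1)) • (ContinuousLinearMap.proj j : (Fin m → ℝ) →L[ℝ] ℝ)))
          + (μ l * Y j ^ (μ l - 1)) •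
            ((1 / μ l) • (((1 / μ l - 1) * (Sfun n μ l Y) ^ (1 / μ l - 1 - 1)) • Sder n μ l Y))) Y :=
      hA.mul hB
    simpa only [if_pos h] using hmul
  · simp only [Fder, if_neg h]
    exact hasFDerivAt_const 0 Y

lemma fderiv_F_nonpos (hμ : ∀ l, 1 ≤ μ l) (hne : ∀ l, (n l).Nonempty)
    (j k : Fin m) (hjk : j ≠ k) (Y : Fin m → ℝ) (hY : ∀ i, 0 < Y i) :
    fderiv ℝ (Ffun n μ j) Y (Pi.single k 1) ≤ 0 := by
  rw [(hasFDerivAt_F n μ hne j Y hY).fderiv]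
  rw [ContinuousLinearMap.sum_apply]
  apply Finset.sum_nonpos
  intro l _
  by_cases h : j ∈ n l
  · simp only [Fder, if_pos h, ContinuousLinearMap.add_apply,
      ContinuousLinearMap.smul_apply, ContinuousLinearMap.proj_apply,
      Sder_single, smul_eq_mul]
    have hsj : (Pi.single k 1 : Fin m → ℝ) j = 0 := Pi.single_eq_of_ne hjk 1
    rw [hsj]
    have hμl : 0 < μ l := lt_of_lt_of_le one_pos (hμ l)
    have hS := Spos n μ l (hne l) Y hY
    have hterm : (1 / μ l - 1) ≤ 0 := by
      have : 1 / μ l ≤ 1 := by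
        rw [div_le_one hμl]; exact hμ l
      linarith
    have h1 : (1 / μ l - 1) * (Sfun n μ l Y) ^ (1 / μ l - 1 - 1) ≤ 0 :=
      mul_nonpos_of_nonpos_of_nonneg hterm (Real.rpow_pos_of_pos hS _).le
    have h2 : 0 ≤ (if k ∈ n l then μ l * Y k ^ (μ l - 1) else 0) := by
      by_cases hk : k ∈ n l
      · rw [if_pos hk]
        exact mul_nonneg hμl.le (Real.rpow_pos_of_pos (hY k) _).le
      · rw [if_neg hk]
    have h3 : 0 ≤ μ l * Y j ^ (μ l - 1) :=
      mul_nonneg hμl.le (Real.rpow_pos_of_pos (hY j) _).le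
    have h4 : 0 ≤ 1 / μ l := by positivity
    nlinarith [mul_nonneg h4 (mul_nonneg h3 h2)]
  · simp [Fder, if_neg h]
end

theorem nested_logit_mixed_second_partial_nonpos (m L : ℕ)
    (n : Fin L → Finset (Fin m)) (μ : Fin L → ℝ) (hμ : ∀ l, 1 ≤ μ l)
    (hne : ∀ l, (n l).Nonempty)
    (hdisj : ∀ l l', l ≠ l' → Disjoint (n l) (n l'))
    (hcover : ∀ j : Fin m, ∃ l, j ∈ n l) :
    ∀ Y : Fin m → ℝ, (∀ j, 0 < Y j) → ∀ j k : Fin m, j ≠ k →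
      fderiv ℝ
        (fun Z : Fin m → ℝ =>
          fderiv ℝ
            (fun W : Fin m → ℝ =>
              ∑ l : Fin L, (∑ i ∈ n l, (W i) ^ μ l) ^ (1 / μ l))
            Z (Pi.single j 1))
        Y (Pi.single k 1) ≤ 0 := by
  intro Y hY j k hjk
  have hU : IsOpen {Z : Fin m → ℝ | ∀ i, 0 < Z i} := by
    have : {Z : Fin m → ℝ | ∀ i, 0 < Z i} = Set.univ.pi (fun _ => Set.Ioi (0:ℝ)) := by
      ext Z; simp [Set.mem_pi]
    rw [this]
    exact isOpen_set_pi Set.finite_univ (fun _ _ => isOpen_Ioi)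
  have hev : (fun Z : Fin m → ℝ =>
      fderiv ℝ (fun W : Fin m → ℝ =>
        ∑ l : Fin L, (∑ i ∈ n l, (W i) ^ μ l) ^ (1 / μ l)) Z (Pi.single j 1))
      =ᶠ[nhds Y] (Ffun n μ j) := by
    filter_upwards [hU.mem_nhds hY] with Z hZ
    exact fderiv_G_single n μ hne j Z hZ
  rw [hev.fderiv_eq]
  exact fderiv_F_nonpos n μ hμ hne j k hjk Y hY
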